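/- arXiv:1312.2933 — 2 statements merged into one kernel-verified Lean document; each statement's English description precedes it below -/
import Mathlib

section
/- Let (f,g,h,ρ) be a general warped Berger solution of Ricci flow on S^1×S^3 defined on [0,T). If g(ξ,0) ≤ h(ξ,0) for all ξ ∈ S^1, then g(ξ,t) ≤ h(ξ,t) for all (ξ,t) ∈ S^1×[0,T). (By the permutation symmetry of the system, any ordering among f, g, h that holds at t=0 is preserved for all t ∈ [0,T).) -/
open Real Set Filter Topology
open scoped ENNReal

noncomputable section

/-- Partial derivative in the first (spatial, `ξ`) variable. -/
def pd1 (φ : ℝ → ℝ → ℝ) (ξ t : ℝ) : ℝ := deriv (fun x => φ x t) ξ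

/-- Partial derivative in the second (time) variable: `φ_t`. -/
def pdt (φ : ℝ → ℝ → ℝ) (ξ t : ℝ) : ℝ := deriv (fun τ => φ ξ τ) t

/-- Derivative with respect to arclength `s` (where `ds = ρ dξ`): `φ_s := ρ⁻¹ ∂_ξ φ`. -/
def Ds (ρ φ : ℝ → ℝ → ℝ) (ξ t : ℝ) : ℝ := pd1 φ ξ t / ρ ξ t

/-- `t` lies in the existence interval `[0,T)`, where `T ∈ (0,∞]`. -/
def InDom (T : ℝ≥0∞) (t : ℝ) : Prop := 0 ≤ t ∧ ENNReal.ofReal t < T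

/-- Fiber sectional curvature `κ̂₁₂ = (f²−g²)²/(fgh)² − 3h²/(fg)² + 2/f² + 2/g²`. -/
def hk12 (f g h : ℝ → ℝ → ℝ) (ξ t : ℝ) : ℝ :=
  ((f ξ t) ^ 2 - (g ξ t) ^ 2) ^ 2 / (f ξ t * g ξ t * h ξ t) ^ 2
    - 3 * (h ξ t) ^ 2 / (f ξ t * g ξ t) ^ 2 + 2 / (f ξ t) ^ 2 + 2 / (g ξ t) ^ 2

/-- Fiber sectional curvature `κ̂₂₃ = (g²−h²)²/(fgh)² − 3f²/(gh)² + 2/g² + 2/h²`. -/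
def hk23 (f g h : ℝ → ℝ → ℝ) (ξ t : ℝ) : ℝ :=
  ((g ξ t) ^ 2 - (h ξ t) ^ 2) ^ 2 / (f ξ t * g ξ t * h ξ t) ^ 2
    - 3 * (f ξ t) ^ 2 / (g ξ t * h ξ t) ^ 2 + 2 / (g ξ t) ^ 2 + 2 / (h ξ t) ^ 2

/-- Fiber sectional curvature `κ̂₃₁ = (f²−h²)²/(fgh)² − 3g²/(fh)² + 2/f² + 2/h²`. -/
def hk31 (f g h : ℝ → ℝ → ℝ) (ξ t : ℝ) : ℝ :=
  ((f ξ t) ^ 2 - (h ξ t) ^ 2) ^ 2 / (f ξ t * g ξ t * h ξ t) ^ 2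
    - 3 * (g ξ t) ^ 2 / (f ξ t * h ξ t) ^ 2 + 2 / (f ξ t) ^ 2 + 2 / (h ξ t) ^ 2

/-- A general warped Berger solution `(f,g,h,ρ)` of Ricci flow on `S¹ × S³` with
existence time `T ∈ (0,∞]`:  smooth positive `2π`-periodic-in-`ξ` functions on
`S¹ × [0,T)` satisfying
  `f_t = f_ss + (g_s/g + h_s/h) f_s − f(κ̂₁₂ + κ̂₃₁)`,
  `g_t = g_ss + (f_s/f + h_s/h) g_s − g(κ̂₁₂ + κ̂₂₃)`,
  `h_t = h_ss + (f_s/f + g_s/g) h_s − h(κ̂₂₃ + κ̂₃₁)`,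
  `(log ρ)_t = f_ss/f + g_ss/g + h_ss/h`. -/
structure GeneralWarpedBerger (T : ℝ≥0∞) (f g h ρ : ℝ → ℝ → ℝ) : Prop where
  T_pos : 0 < T
  f_pos : ∀ ξ t : ℝ, InDom T t → 0 < f ξ t
  g_pos : ∀ ξ t : ℝ, InDom T t → 0 < g ξ t
  h_pos : ∀ ξ t : ℝ, InDom T t → 0 < h ξ t
  ρ_pos : ∀ ξ t : ℝ, InDom T t → 0 < ρ ξ t
  f_per : ∀ ξ t : ℝ, f (ξ + 2 * π) t = f ξ t
  g_per : ∀ ξ t : ℝ, g (ξ + 2 * π) t = g ξ t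
  h_per : ∀ ξ t : ℝ, h (ξ + 2 * π) t = h ξ t
  ρ_per : ∀ ξ t : ℝ, ρ (ξ + 2 * π) t = ρ ξ t
  smooth : ContDiffOn ℝ (⊤ : ℕ∞)
      (fun p : ℝ × ℝ => (f p.1 p.2, g p.1 p.2, h p.1 p.2, ρ p.1 p.2))
      (Set.univ ×ˢ {t : ℝ | InDom T t})
  eq_f : ∀ ξ t : ℝ, 0 < t → InDom T t →
    pdt f ξ t = Ds ρ (Ds ρ f) ξ t
      + (Ds ρ g ξ t / g ξ t + Ds ρ h ξ t / h ξ t) * Ds ρ f ξ t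
      - f ξ t * (hk12 f g h ξ t + hk31 f g h ξ t)
  eq_g : ∀ ξ t : ℝ, 0 < t → InDom T t →
    pdt g ξ t = Ds ρ (Ds ρ g) ξ t
      + (Ds ρ f ξ t / f ξ t + Ds ρ h ξ t / h ξ t) * Ds ρ g ξ t
      - g ξ t * (hk12 f g h ξ t + hk23 f g h ξ t)
  eq_h : ∀ ξ t : ℝ, 0 < t → InDom T t →
    pdt h ξ t = Ds ρ (Ds ρ h) ξ t
      + (Ds ρ f ξ t / f ξ t + Ds ρ g ξ t / g ξ t) * Ds ρ h ξ t
      - h ξ t * (hk23 f g h ξ t + hk31 f g h ξ t)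
  eq_ρ : ∀ ξ t : ℝ, 0 < t → InDom T t →
    pdt (fun x τ => Real.log (ρ x τ)) ξ t
      = Ds ρ (Ds ρ f) ξ t / f ξ t + Ds ρ (Ds ρ g) ξ t / g ξ t + Ds ρ (Ds ρ h) ξ t / h ξ t


/-- Second-derivative test at an interior local minimum. -/
lemma aux_second_deriv_nonneg {φ : ℝ → ℝ} (hφ : ContDiff ℝ (⊤ : ℕ∞) φ) {a : ℝ}
    (hmin : IsLocalMin φ a) : 0 ≤ deriv (deriv φ) a := by
  by_contra hneg
  push_neg at hneg
  have h1 : deriv φ a = 0 := hmin.deriv_eq_zero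
  have hd : ContDiff ℝ (⊤ : ℕ∞) (deriv φ) := (contDiff_infty_iff_deriv.mp hφ).2
  have hDD : HasDerivAt (deriv φ) (deriv (deriv φ) a) a :=
    ((contDiff_infty_iff_deriv.mp hd).1 a).hasDerivAt
  have hslope := hasDerivAt_iff_tendsto_slope.mp hDD
  have hs' : Tendsto (slope (deriv φ) a) (𝓝[>] a) (𝓝 (deriv (deriv φ) a)) :=
    hslope.mono_left (nhdsWithin_mono a (fun x hx => ne_of_gt hx))
  have hev : ∀ᶠ x in 𝓝[>] a, slope (deriv φ) a x < 0 := hs'.eventually_lt_const hneg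
  have hev2 : ∀ᶠ x in 𝓝[>] a, deriv φ x < 0 := by
    filter_upwards [hev, self_mem_nhdsWithin] with x hx hx'
    rw [slope_def_field, h1, sub_zero] at hx
    have hxa : (0:ℝ) < x - a := sub_pos.mpr hx'
    by_contra hcon
    push_neg at hcon
    exact absurd (div_nonneg hcon (le_of_lt hxa)) (not_le.mpr hx)
  have hm' : ∀ᶠ x in 𝓝[>] a, φ a ≤ φ x := hmin.filter_mono nhdsWithin_le_nhds
  obtain ⟨b, hb, hsub⟩ := mem_nhdsGT_iff_exists_Ioo_subset.mp (hev2.and hm')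
  have hab : a < b := hb
  set m := (a + b) / 2 with hm
  have ham : a < m := by simp [hm]; linarith
  have hmb : m < b := by simp [hm]; linarith
  have hanti : StrictAntiOn φ (Icc a m) := by
    refine strictAntiOn_of_deriv_neg (convex_Icc a m) hφ.continuous.continuousOn ?_
    intro x hx
    rw [interior_Icc] at hx
    exact (hsub ⟨hx.1, lt_trans hx.2 hmb⟩).1
  have h2 : φ m < φ a := hanti ⟨le_refl a, le_of_lt ham⟩ ⟨le_of_lt ham, le_refl m⟩ ham
  have h3 : φ a ≤ φ m := (hsub ⟨ham, hmb⟩).2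
  linarith

/-- At a first-touch point in time, the time derivative is nonpositive. -/
lemma aux_deriv_nonpos {ψ : ℝ → ℝ} {a d : ℝ} (ha : 0 < a) (hd : HasDerivAt ψ d a)
    (hpos : ∀ t ∈ Ioo 0 a, ψ a < ψ t) : d ≤ 0 := by
  have hs := hasDerivAt_iff_tendsto_slope.mp hd
  have hs' : Tendsto (slope ψ a) (𝓝[<] a) (𝓝 d) :=
    hs.mono_left (nhdsWithin_mono a (fun x hx => ne_of_lt hx))
  have hmem : Ioo 0 a ∈ 𝓝[<] a := by
    rw [← Ioi_inter_Iio]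
    exact inter_mem (mem_nhdsWithin_of_mem_nhds (Ioi_mem_nhds ha)) self_mem_nhdsWithin
  refine le_of_tendsto hs' ?_
  filter_upwards [hmem] with t ht
  rw [slope_def_field]
  have h1 : 0 ≤ ψ t - ψ a := by have := hpos t ht; linarith
  have h2 : t - a ≤ 0 := by have := ht.2; linarith
  exact div_nonpos_of_nonneg_of_nonpos h1 h2

/-- Spatial slice of a jointly smooth function is smooth. -/
lemma aux_slice {φ : ℝ → ℝ → ℝ} {D : Set ℝ}
    (hF : ContDiffOn ℝ (⊤ : ℕ∞) (fun p : ℝ × ℝ => φ p.1 p.2) (Set.univ ×ˢ D)) {t : ℝ}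
    (ht : t ∈ D) : ContDiff ℝ (⊤ : ℕ∞) (fun x => φ x t) := by
  rw [← contDiffOn_univ]
  exact hF.comp ((contDiff_id.prodMk contDiff_const).contDiffOn)
    (fun x _ => ⟨trivial, ht⟩)

lemma one_le_top' : (1 : WithTop ℕ∞) ≤ ((⊤ : ℕ∞) : WithTop ℕ∞) := by
  exact_mod_cast (le_top : (1 : ℕ∞) ≤ ⊤)

lemma top_ne_zero'' : ((⊤ : ℕ∞) : WithTop ℕ∞) ≠ 0 := by
  simp

lemma aux_pd1_eq {φ : ℝ → ℝ → ℝ} {D : Set ℝ}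
    (hF : ContDiffOn ℝ (⊤ : ℕ∞) (fun p : ℝ × ℝ => φ p.1 p.2) (Set.univ ×ˢ D))
    {p : ℝ × ℝ} (hp : p ∈ Set.univ ×ˢ D) :
    deriv (fun x => φ x p.2) p.1
      = fderivWithin ℝ (fun q : ℝ × ℝ => φ q.1 q.2) (Set.univ ×ˢ D) p (1, 0) := by
  have hdiff : DifferentiableWithinAt ℝ (fun q : ℝ × ℝ => φ q.1 q.2) (Set.univ ×ˢ D) p :=
    (hF.differentiableOn top_ne_zero'') p hp
  have h1 := hdiff.hasFDerivWithinAt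
  have hu : HasFDerivAt (fun x : ℝ => ((x, p.2) : ℝ × ℝ))
      ((ContinuousLinearMap.id ℝ ℝ).prod 0) p.1 :=
    HasFDerivAt.prodMk (hasFDerivAt_id p.1) (hasFDerivAt_const p.2 p.1)
  have hmt : Set.MapsTo (fun x : ℝ => ((x, p.2) : ℝ × ℝ)) Set.univ (Set.univ ×ˢ D) :=
    fun x _ => ⟨trivial, hp.2⟩
  have h2 := h1.comp p.1 (hu.hasFDerivWithinAt (s := Set.univ)) hmt
  rw [hasFDerivWithinAt_univ] at h2
  have h3 := h2.hasDerivAt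
  have h4 : (fun x : ℝ => φ x p.2) = ((fun q : ℝ × ℝ => φ q.1 q.2) ∘ fun x : ℝ => (x, p.2)) :=
    rfl
  rw [h4]
  rw [h3.deriv]
  simp

lemma aux_pd1_contOn {φ : ℝ → ℝ → ℝ} {D : Set ℝ} (hconv : Convex ℝ D)
    (hint : (interior D).Nonempty)
    (hF : ContDiffOn ℝ (⊤ : ℕ∞) (fun p : ℝ × ℝ => φ p.1 p.2) (Set.univ ×ˢ D)) :
    ContinuousOn (fun p : ℝ × ℝ => deriv (fun x => φ x p.2) p.1) (Set.univ ×ˢ D) := by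
  have hs : UniqueDiffOn ℝ (Set.univ ×ˢ D : Set (ℝ × ℝ)) := by
    refine uniqueDiffOn_convex (convex_univ.prod hconv) ?_
    rw [interior_prod_eq, interior_univ]
    exact univ_nonempty.prod hint
  have hc := hF.continuousOn_fderivWithin hs one_le_top'
  have hc2 : ContinuousOn
      (fun p : ℝ × ℝ => fderivWithin ℝ (fun q : ℝ × ℝ => φ q.1 q.2) (Set.univ ×ˢ D) p (1, 0))
      (Set.univ ×ˢ D) := hc.clm_apply continuousOn_const
  exact hc2.congr (fun p hp => aux_pd1_eq hF hp)

/-- The polynomial appearing in the reaction-term identity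
`g(κ̂₁₂+κ̂₂₃) − h(κ̂₂₃+κ̂₃₁) = (g−h)·Ppoly f g h/(fgh)²`. -/
def Ppoly (F G H : ℝ) : ℝ :=
  (G^2 - H^2)^2 - 3*F^4 + 2*F^2*H^2 + 2*F^2*G^2 + F^4
    - 2*F^2*(G^2 + G*H + H^2) + (G^4 + G^3*H + G^2*H^2 + G*H^3 + H^4)
    + 3*(G^2 + G*H + H^2)*G*H + 2*G^2*H^2 - 2*F^2*G*H

set_option maxHeartbeats 1000000 in
/-- For a general warped Berger solution of Ricci flow on `S¹ × S³`,
any ordering among the warping functions that holds at `t = 0` (here: `g ≤ h`) is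
preserved for all `t ∈ [0,T)`. -/
theorem ordering_preserved (T : ℝ≥0∞) (f g h ρ : ℝ → ℝ → ℝ)
    (sol : GeneralWarpedBerger T f g h ρ)
    (h0 : ∀ ξ : ℝ, g ξ 0 ≤ h ξ 0) :
    ∀ ξ t : ℝ, InDom T t → g ξ t ≤ h ξ t := by
  intro ξ0 t0 ht0
  rcases eq_or_lt_of_le ht0.1 with h00 | ht0pos
  · rw [← h00]; exact h0 ξ0
  -- notation for the domain
  set D : Set ℝ := {t : ℝ | InDom T t} with hDdef
  have hsubD : Icc 0 t0 ⊆ D := fun t ht =>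
    ⟨ht.1, lt_of_le_of_lt (ENNReal.ofReal_le_ofReal ht.2) ht0.2⟩
  have ht0D : t0 ∈ D := ⟨ht0.1, ht0.2⟩
  have hDconv : Convex ℝ D := by
    rw [convex_iff_ordConnected]
    exact ⟨fun x hx y hy z hz =>
      ⟨le_trans hx.1 hz.1, lt_of_le_of_lt (ENNReal.ofReal_le_ofReal hz.2) hy.2⟩⟩
  have hDopen : IsOpen (Ioi (0:ℝ) ∩ {u : ℝ | ENNReal.ofReal u < T}) :=
    isOpen_Ioi.inter (isOpen_Iio.preimage ENNReal.continuous_ofReal)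
  have hDopen_sub : Ioi (0:ℝ) ∩ {u : ℝ | ENNReal.ofReal u < T} ⊆ D :=
    fun u hu => ⟨le_of_lt hu.1, hu.2⟩
  have hDint : (interior D).Nonempty :=
    ⟨t0, (hDopen.subset_interior_iff.mpr hDopen_sub) ⟨ht0pos, ht0.2⟩⟩
  have hmemnhds : ∀ (ξ t : ℝ), 0 < t → InDom T t →
      (Set.univ ×ˢ D : Set (ℝ × ℝ)) ∈ 𝓝 ((ξ, t) : ℝ × ℝ) := by
    intro ξ t htpos htdom
    have h1 : (Set.univ ×ˢ (Ioi (0:ℝ) ∩ {u : ℝ | ENNReal.ofReal u < T}) : Set (ℝ × ℝ))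
        ∈ 𝓝 ((ξ, t) : ℝ × ℝ) :=
      (isOpen_univ.prod hDopen).mem_nhds ⟨trivial, htpos, htdom.2⟩
    exact mem_of_superset h1 (Set.prod_mono subset_rfl hDopen_sub)
  -- smoothness of components
  have hfC : ContDiffOn ℝ (⊤ : ℕ∞) (fun p : ℝ × ℝ => f p.1 p.2) (Set.univ ×ˢ D) :=
    contDiff_fst.comp_contDiffOn sol.smooth
  have hgC : ContDiffOn ℝ (⊤ : ℕ∞) (fun p : ℝ × ℝ => g p.1 p.2) (Set.univ ×ˢ D) :=
    (contDiff_fst.comp contDiff_snd).comp_contDiffOn sol.smooth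
  have hhC : ContDiffOn ℝ (⊤ : ℕ∞) (fun p : ℝ × ℝ => h p.1 p.2) (Set.univ ×ˢ D) :=
    (contDiff_fst.comp (contDiff_snd.comp contDiff_snd)).comp_contDiffOn sol.smooth
  have hρC : ContDiffOn ℝ (⊤ : ℕ∞) (fun p : ℝ × ℝ => ρ p.1 p.2) (Set.univ ×ˢ D) :=
    (contDiff_snd.comp (contDiff_snd.comp contDiff_snd)).comp_contDiffOn sol.smooth
  -- spatial derivative continuity
  have hpd1g : ContinuousOn (fun p : ℝ × ℝ => pd1 g p.1 p.2) (Set.univ ×ˢ D) :=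
    aux_pd1_contOn hDconv hDint hgC
  have hpd1h : ContinuousOn (fun p : ℝ × ℝ => pd1 h p.1 p.2) (Set.univ ×ˢ D) :=
    aux_pd1_contOn hDconv hDint hhC
  -- compact space-time box
  set K : Set (ℝ × ℝ) := Icc 0 (2*π) ×ˢ Icc 0 t0 with hKdef
  have hKs : K ⊆ Set.univ ×ˢ D := Set.prod_mono (subset_univ _) hsubD
  have hKc : IsCompact K := isCompact_Icc.prod isCompact_Icc
  -- the zeroth-order coefficient
  set cf : ℝ × ℝ → ℝ := fun p =>
    pd1 g p.1 p.2 * pd1 h p.1 p.2 / ((ρ p.1 p.2)^2 * (g p.1 p.2 * h p.1 p.2))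
      - Ppoly (f p.1 p.2) (g p.1 p.2) (h p.1 p.2)
          / (f p.1 p.2 * g p.1 p.2 * h p.1 p.2)^2 with hcf
  have hfcont := hfC.continuousOn
  have hgcont := hgC.continuousOn
  have hhcont := hhC.continuousOn
  have hρcont := hρC.continuousOn
  have hcfc : ContinuousOn cf K := by
    have c1 : ContinuousOn (fun p : ℝ × ℝ => pd1 g p.1 p.2 * pd1 h p.1 p.2) K :=
      (hpd1g.mono hKs).mul (hpd1h.mono hKs)
    have c2 : ContinuousOn (fun p : ℝ × ℝ => (ρ p.1 p.2)^2 * (g p.1 p.2 * h p.1 p.2)) K :=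
      ((hρcont.mono hKs).pow 2).mul ((hgcont.mono hKs).mul (hhcont.mono hKs))
    have c2ne : ∀ p ∈ K, (ρ p.1 p.2)^2 * (g p.1 p.2 * h p.1 p.2) ≠ 0 := by
      intro p hp
      have hd : InDom T p.2 := (hKs hp).2
      have h1 := sol.ρ_pos p.1 p.2 hd
      have h2 := sol.g_pos p.1 p.2 hd
      have h3 := sol.h_pos p.1 p.2 hd
      positivity
    have cF : ContinuousOn (fun p : ℝ × ℝ => f p.1 p.2) K := hfcont.mono hKs
    have cG : ContinuousOn (fun p : ℝ × ℝ => g p.1 p.2) K := hgcont.mono hKs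
    have cH : ContinuousOn (fun p : ℝ × ℝ => h p.1 p.2) K := hhcont.mono hKs
    have c3 : ContinuousOn
        (fun p : ℝ × ℝ => Ppoly (f p.1 p.2) (g p.1 p.2) (h p.1 p.2)) K := by
      unfold Ppoly
      fun_prop
    have c4 : ContinuousOn (fun p : ℝ × ℝ => (f p.1 p.2 * g p.1 p.2 * h p.1 p.2)^2) K :=
      (((hfcont.mono hKs).mul (hgcont.mono hKs)).mul (hhcont.mono hKs)).pow 2
    have c4ne : ∀ p ∈ K, (f p.1 p.2 * g p.1 p.2 * h p.1 p.2)^2 ≠ 0 := by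
      intro p hp
      have hd : InDom T p.2 := (hKs hp).2
      have h1 := sol.f_pos p.1 p.2 hd
      have h2 := sol.g_pos p.1 p.2 hd
      have h3 := sol.h_pos p.1 p.2 hd
      positivity
    rw [hcf]
    exact (c1.div c2 c2ne).sub (c3.div c4 c4ne)
  obtain ⟨Λ₀, hΛ₀⟩ := hKc.exists_bound_of_continuousOn hcfc
  set Λ : ℝ := max Λ₀ 0 with hΛdef
  have hΛnn : (0:ℝ) ≤ Λ := le_max_right _ _
  have hΛ : ∀ p ∈ K, |cf p| ≤ Λ := fun p hp =>
    le_trans (le_of_eq (Real.norm_eq_abs _).symm) (le_trans (hΛ₀ p hp) (le_max_left _ _))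
  -- the key barrier claim
  have key : ∀ ε : ℝ, 0 < ε → ∀ ξ t : ℝ, t ∈ Icc 0 t0 →
      0 < h ξ t - g ξ t + ε * ((1 + t) * Real.exp (Λ * t)) := by
    intro ε hε
    by_contra hcon
    push_neg at hcon
    obtain ⟨ξ1, t1, ht1, hle⟩ := hcon
    set vf : ℝ × ℝ → ℝ := fun p =>
      h p.1 p.2 - g p.1 p.2 + ε * ((1 + p.2) * Real.exp (Λ * p.2)) with hvf
    have hvper : ∀ τ : ℝ, Function.Periodic (fun x => vf (x, τ)) (2*π) := by
      intro τ x
      simp only [hvf]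
      rw [sol.h_per, sol.g_per]
    obtain ⟨ξ1', hξ1'mem, hξ1'eq⟩ := (hvper t1).exists_mem_Ico₀ Real.two_pi_pos ξ1
    have hvK : ContinuousOn vf K := by
      refine ContinuousOn.add ((hhcont.mono hKs).sub (hgcont.mono hKs)) ?_
      exact (Continuous.continuousOn (by fun_prop))
    set B : Set (ℝ × ℝ) := K ∩ vf ⁻¹' (Iic 0) with hBdef
    have hBne : B.Nonempty := by
      refine ⟨(ξ1', t1), ⟨Ico_subset_Icc_self hξ1'mem, ht1⟩, ?_⟩
      have : vf (ξ1, t1) ≤ 0 := hle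
      rw [hξ1'eq] at this
      exact this
    have hBclosed : IsClosed B := hvK.preimage_isClosed_of_isClosed hKc.isClosed isClosed_Iic
    have hBcpt : IsCompact B := hKc.of_isClosed_subset hBclosed inter_subset_left
    set Ts : Set ℝ := Prod.snd '' B with hTs
    have hTscpt : IsCompact Ts := hBcpt.image continuous_snd
    have hTsne : Ts.Nonempty := hBne.image _
    set ts : ℝ := sInf Ts with hts
    have htsmem : ts ∈ Ts := hTscpt.sInf_mem hTsne
    obtain ⟨pb, hbmem, hbeq⟩ := htsmem
    have htsIcc : ts ∈ Icc 0 t0 := by rw [← hbeq]; exact hbmem.1.2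
    have hvb : vf (pb.1, ts) ≤ 0 := by rw [← hbeq]; exact hbmem.2
    have hmin' : ∀ p : ℝ × ℝ, p ∈ K → p.2 < ts → 0 < vf p := by
      intro p hp hlt
      by_contra hnp
      push_neg at hnp
      exact absurd (csInf_le hTscpt.bddBelow ⟨p, ⟨hp, hnp⟩, rfl⟩) (not_le.mpr hlt)
    have htspos : 0 < ts := by
      rcases eq_or_lt_of_le htsIcc.1 with he | hlt
      · exfalso
        rw [← he] at hvb
        have hge := h0 pb.1
        simp only [hvf] at hvb
        rw [mul_zero, Real.exp_zero, add_zero] at hvb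
        nlinarith
      · exact hlt
    have htsDom : InDom T ts := hsubD htsIcc
    -- spatial minimum at time ts
    have hScont : ContinuousOn (fun x => vf (x, ts)) (Icc 0 (2*π)) := by
      refine hvK.comp (Continuous.continuousOn (by fun_prop)) ?_
      exact fun x hx => ⟨hx, htsIcc⟩
    obtain ⟨ξs, hξsmem, hξsmin⟩ :=
      isCompact_Icc.exists_isMinOn ⟨0, ⟨le_refl 0, by positivity⟩⟩ hScont
    have hvs_le : vf (ξs, ts) ≤ 0 := le_trans (hξsmin hbmem.1.1) hvb
    -- time-slice continuity and left positivity give vf (ξs, ts) ≥ 0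
    have hhAt : ContDiffAt ℝ (⊤ : ℕ∞) (fun p : ℝ × ℝ => h p.1 p.2) (ξs, ts) :=
      hhC.contDiffAt (hmemnhds ξs ts htspos htsDom)
    have hgAt : ContDiffAt ℝ (⊤ : ℕ∞) (fun p : ℝ × ℝ => g p.1 p.2) (ξs, ts) :=
      hgC.contDiffAt (hmemnhds ξs ts htspos htsDom)
    have hcurve : ContDiff ℝ (⊤ : ℕ∞) (fun τ : ℝ => ((ξs, τ) : ℝ × ℝ)) :=
      contDiff_const.prodMk contDiff_id
    have hhdt : DifferentiableAt ℝ (fun τ => h ξs τ) ts :=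
      (hhAt.comp ts hcurve.contDiffAt).differentiableAt top_ne_zero''
    have hgdt : DifferentiableAt ℝ (fun τ => g ξs τ) ts :=
      (hgAt.comp ts hcurve.contDiffAt).differentiableAt top_ne_zero''
    have hψcont : ContinuousAt (fun τ => vf (ξs, τ)) ts := by
      have h1 : ContinuousAt (fun τ => h ξs τ) ts := hhdt.continuousAt
      have h2 : ContinuousAt (fun τ => g ξs τ) ts := hgdt.continuousAt
      have h3 : ContinuousAt (fun τ : ℝ => ε * ((1 + τ) * Real.exp (Λ * τ))) ts :=
        (Continuous.continuousAt (by fun_prop))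
      exact (h1.sub h2).add h3
    have hvs_ge : 0 ≤ vf (ξs, ts) := by
      have htd : Tendsto (fun τ => vf (ξs, τ)) (𝓝[<] ts) (𝓝 (vf (ξs, ts))) :=
        hψcont.tendsto.mono_left nhdsWithin_le_nhds
      have hmem2 : Ioo 0 ts ∈ 𝓝[<] ts := by
        rw [← Ioi_inter_Iio]
        exact inter_mem (mem_nhdsWithin_of_mem_nhds (Ioi_mem_nhds htspos)) self_mem_nhdsWithin
      refine ge_of_tendsto htd ?_
      filter_upwards [hmem2] with τ hτ
      exact le_of_lt (hmin' (ξs, τ)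
        ⟨hξsmem, ⟨le_of_lt hτ.1, le_trans (le_of_lt hτ.2) htsIcc.2⟩⟩ hτ.2)
    have hvs0 : vf (ξs, ts) = 0 := le_antisymm hvs_le hvs_ge
    -- global spatial minimum
    have hglob : ∀ x : ℝ, 0 ≤ vf (x, ts) := by
      intro x
      obtain ⟨y, hy, hxy⟩ := (hvper ts).exists_mem_Ico₀ Real.two_pi_pos x
      rw [hxy]
      calc (0:ℝ) = vf (ξs, ts) := hvs0.symm
      _ ≤ vf (y, ts) := hξsmin (Ico_subset_Icc_self hy)
    -- the spatial slice of w = h - g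
    set φw : ℝ → ℝ := fun x => h x ts - g x ts with hφw
    have hφwC : ContDiff ℝ (⊤ : ℕ∞) φw := (aux_slice hhC htsDom).sub (aux_slice hgC htsDom)
    have hlocmin : IsLocalMin φw ξs := by
      refine Filter.Eventually.of_forall (fun x => ?_)
      have h1 := hglob x
      simp only [hvf] at h1 hvs0
      simp only [hφw]
      linarith
    have hd1 : deriv φw ξs = 0 := hlocmin.deriv_eq_zero
    have hd2 : 0 ≤ deriv (deriv φw) ξs := aux_second_deriv_nonneg hφwC hlocmin
    have hdh : Differentiable ℝ (fun x => h x ts) :=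
      (aux_slice hhC htsDom).differentiable top_ne_zero''
    have hdg : Differentiable ℝ (fun x => g x ts) :=
      (aux_slice hgC htsDom).differentiable top_ne_zero''
    have hsubd : ∀ x : ℝ, deriv φw x = pd1 h x ts - pd1 g x ts := by
      intro x
      rw [hφw]
      exact deriv_sub (hdh x) (hdg x)
    have hgh : pd1 g ξs ts = pd1 h ξs ts := by
      have := hsubd ξs
      rw [hd1] at this
      linarith
    -- second arclength derivative of w at the minimum
    have hρpos : ∀ x : ℝ, 0 < ρ x ts := fun x => sol.ρ_pos x ts htsDom
    have hAh : DifferentiableAt ℝ (fun x => pd1 h x ts) ξs :=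
      (((contDiff_infty_iff_deriv.mp (aux_slice hhC htsDom)).2.differentiable
        top_ne_zero'') ξs)
    have hAg : DifferentiableAt ℝ (fun x => pd1 g x ts) ξs :=
      (((contDiff_infty_iff_deriv.mp (aux_slice hgC htsDom)).2.differentiable
        top_ne_zero'') ξs)
    have hBd : DifferentiableAt ℝ (fun x => ρ x ts) ξs :=
      ((aux_slice hρC htsDom).differentiable top_ne_zero'') ξs
    have hφd2 : DifferentiableAt ℝ (deriv φw) ξs :=
      ((contDiff_infty_iff_deriv.mp hφwC).2.differentiable top_ne_zero'') ξs
    have hX : Ds ρ (Ds ρ h) ξs ts - Ds ρ (Ds ρ g) ξs ts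
        = deriv (deriv φw) ξs / (ρ ξs ts)^2 := by
      have e1 : Ds ρ (Ds ρ h) ξs ts = deriv (fun x => pd1 h x ts / ρ x ts) ξs / ρ ξs ts := rfl
      have e2 : Ds ρ (Ds ρ g) ξs ts = deriv (fun x => pd1 g x ts / ρ x ts) ξs / ρ ξs ts := rfl
      have hq1 : DifferentiableAt ℝ (fun x => pd1 h x ts / ρ x ts) ξs :=
        hAh.div hBd (ne_of_gt (hρpos ξs))
      have hq2 : DifferentiableAt ℝ (fun x => pd1 g x ts / ρ x ts) ξs :=
        hAg.div hBd (ne_of_gt (hρpos ξs))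
      have hq : (fun x => pd1 h x ts / ρ x ts - pd1 g x ts / ρ x ts)
          = (fun x => deriv φw x / ρ x ts) := by
        funext x
        rw [hsubd x]
        ring
      have hstep : deriv (fun x => pd1 h x ts / ρ x ts - pd1 g x ts / ρ x ts) ξs
          = deriv (fun x => pd1 h x ts / ρ x ts) ξs
            - deriv (fun x => pd1 g x ts / ρ x ts) ξs := deriv_sub hq1 hq2
      have hstep2 : deriv (fun x => pd1 h x ts / ρ x ts - pd1 g x ts / ρ x ts) ξs
          = deriv (fun x => deriv φw x / ρ x ts) ξs := by rw [hq]
      have hstep3 : deriv (fun x => deriv φw x / ρ x ts) ξs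
          = (deriv (deriv φw) ξs * ρ ξs ts - deriv φw ξs * deriv (fun x => ρ x ts) ξs)
              / (ρ ξs ts)^2 := deriv_div hφd2 hBd (ne_of_gt (hρpos ξs))
      rw [e1, e2, ← sub_div, ← hstep, hstep2, hstep3, hd1]
      have hρne : ρ ξs ts ≠ 0 := ne_of_gt (hρpos ξs)
      field_simp
      ring
    -- the time derivative at (ξs, ts)
    have hdvE : HasDerivAt (fun τ : ℝ => (1 + τ) * Real.exp (Λ * τ))
        (1 * Real.exp (Λ * ts) + (1 + ts) * (Real.exp (Λ * ts) * (Λ * 1))) ts :=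
      (((hasDerivAt_id ts).const_add 1).mul (((hasDerivAt_id ts).const_mul Λ).exp))
    have hψ : HasDerivAt (fun τ => h ξs τ - g ξs τ + ε * ((1 + τ) * Real.exp (Λ * τ)))
        ((deriv (fun τ => h ξs τ) ts - deriv (fun τ => g ξs τ) ts)
          + ε * (1 * Real.exp (Λ * ts) + (1 + ts) * (Real.exp (Λ * ts) * (Λ * 1)))) ts :=
      (hhdt.hasDerivAt.sub hgdt.hasDerivAt).add (hdvE.const_mul ε)
    have hdle : (deriv (fun τ => h ξs τ) ts - deriv (fun τ => g ξs τ) ts)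
          + ε * (1 * Real.exp (Λ * ts) + (1 + ts) * (Real.exp (Λ * ts) * (Λ * 1))) ≤ 0 := by
      refine aux_deriv_nonpos htspos hψ ?_
      intro t ht
      have h1 : 0 < vf (ξs, t) :=
        hmin' (ξs, t) ⟨hξsmem, ⟨le_of_lt ht.1, le_trans (le_of_lt ht.2) htsIcc.2⟩⟩ ht.2
      have h2 : vf (ξs, ts) = 0 := hvs0
      simp only [hvf] at h1 h2
      linarith
    -- the PDE at the minimum point
    have e_h := sol.eq_h ξs ts htspos htsDom
    have e_g := sol.eq_g ξs ts htspos htsDom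
    have hfpos := sol.f_pos ξs ts htsDom
    have hgpos := sol.g_pos ξs ts htsDom
    have hhpos := sol.h_pos ξs ts htsDom
    have hfne : f ξs ts ≠ 0 := ne_of_gt hfpos
    have hgne : g ξs ts ≠ 0 := ne_of_gt hgpos
    have hhne : h ξs ts ≠ 0 := ne_of_gt hhpos
    have hρne : ρ ξs ts ≠ 0 := ne_of_gt (hρpos ξs)
    have hkey : pdt h ξs ts - pdt g ξs ts
        = (Ds ρ (Ds ρ h) ξs ts - Ds ρ (Ds ρ g) ξs ts)
          + cf (ξs, ts) * (h ξs ts - g ξs ts) := by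
      rw [e_h, e_g]
      simp only [hcf, hk12, hk23, hk31, Ds, Ppoly]
      rw [hgh]
      field_simp
      ring
    -- assemble the contradiction
    have hwval : h ξs ts - g ξs ts = -(ε * ((1 + ts) * Real.exp (Λ * ts))) := by
      simp only [hvf] at hvs0
      linarith
    have hcb : cf (ξs, ts) ≤ Λ := le_of_abs_le (hΛ (ξs, ts) ⟨hξsmem, htsIcc⟩)
    have hexp := Real.exp_pos (Λ * ts)
    have hcontra : 0 < (deriv (fun τ => h ξs τ) ts - deriv (fun τ => g ξs τ) ts)
          + ε * (1 * Real.exp (Λ * ts) + (1 + ts) * (Real.exp (Λ * ts) * (Λ * 1))) := by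
      have h1 : deriv (fun τ => h ξs τ) ts - deriv (fun τ => g ξs τ) ts
          = (Ds ρ (Ds ρ h) ξs ts - Ds ρ (Ds ρ g) ξs ts)
            + cf (ξs, ts) * (h ξs ts - g ξs ts) := hkey
      rw [h1, hX, hwval]
      have hXnn : 0 ≤ deriv (deriv φw) ξs / (ρ ξs ts)^2 := div_nonneg hd2 (sq_nonneg _)
      have h2 : 0 ≤ (Λ - cf (ξs, ts)) * (ε * ((1 + ts) * Real.exp (Λ * ts))) := by
        refine mul_nonneg (by linarith) ?_
        have : (0:ℝ) < 1 + ts := by linarith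
        positivity
      nlinarith [h2, hXnn, mul_pos hε hexp]
    exact absurd hcontra (not_lt.mpr hdle)
  -- conclude by letting ε → 0
  by_contra hfin
  push_neg at hfin
  set C : ℝ := (1 + t0) * Real.exp (Λ * t0) with hC
  have hCpos : 0 < C := by
    have : (0:ℝ) < 1 + t0 := by linarith
    positivity
  have hk := key ((g ξ0 t0 - h ξ0 t0) / (2 * C))
    (div_pos (sub_pos.mpr hfin) (by linarith)) ξ0 t0 ⟨ht0.1, le_refl t0⟩
  have hsimp : (g ξ0 t0 - h ξ0 t0) / (2 * C) * ((1 + t0) * Real.exp (Λ * t0))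
      = (g ξ0 t0 - h ξ0 t0) / 2 := by
    rw [← hC]
    field_simp
  rw [hsimp] at hk
  linarith
end
end

section
/- Let (f,g,ρ) be a warped Berger solution of Ricci flow on S^1×S^3 defined on [0,T), and set C₀ := max{ max_ξ |f(ξ,0)−g(ξ,0)|/g(ξ,0), max_ξ |g(ξ,0)−f(ξ,0)|/f(ξ,0) }. Then the pointwise eccentricity bound |f(ξ,t) − g(ξ,t)| ≤ C₀·M(ξ,t) holds for all (ξ,t) ∈ S^1×[0,T). -/
open Real Set Filter Topology
open scoped ENNReal

noncomputable section

/-- A warped Berger solution of Ricci flow on `S¹ × S³` with existence time `T ∈ (0,∞]`: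
smooth positive `2π`-periodic-in-`ξ` functions `f, g, ρ` on `S¹ × [0,T)` satisfying
  `f_t = f_ss + 2 (g_s/g) f_s − 2 f³/g⁴`,
  `g_t = g_ss + (f_s/f + g_s/g) g_s + 2 (f² − 2g²)/g³`,
  `(log ρ)_t = f_ss/f + 2 g_ss/g`. -/
structure WarpedBerger (T : ℝ≥0∞) (f g ρ : ℝ → ℝ → ℝ) : Prop where
  T_pos : 0 < T
  f_pos : ∀ ξ t : ℝ, InDom T t → 0 < f ξ t
  g_pos : ∀ ξ t : ℝ, InDom T t → 0 < g ξ t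
  ρ_pos : ∀ ξ t : ℝ, InDom T t → 0 < ρ ξ t
  f_per : ∀ ξ t : ℝ, f (ξ + 2 * π) t = f ξ t
  g_per : ∀ ξ t : ℝ, g (ξ + 2 * π) t = g ξ t
  ρ_per : ∀ ξ t : ℝ, ρ (ξ + 2 * π) t = ρ ξ t
  smooth : ContDiffOn ℝ (⊤ : ℕ∞)
      (fun p : ℝ × ℝ => (f p.1 p.2, g p.1 p.2, ρ p.1 p.2)) (Set.univ ×ˢ {t : ℝ | InDom T t})
  eq_f : ∀ ξ t : ℝ, 0 < t → InDom T t →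
    pdt f ξ t = Ds ρ (Ds ρ f) ξ t + 2 * (Ds ρ g ξ t / g ξ t) * Ds ρ f ξ t
      - 2 * (f ξ t) ^ 3 / (g ξ t) ^ 4
  eq_g : ∀ ξ t : ℝ, 0 < t → InDom T t →
    pdt g ξ t = Ds ρ (Ds ρ g) ξ t
      + (Ds ρ f ξ t / f ξ t + Ds ρ g ξ t / g ξ t) * Ds ρ g ξ t
      + 2 * ((f ξ t) ^ 2 - 2 * (g ξ t) ^ 2) / (g ξ t) ^ 3
  eq_ρ : ∀ ξ t : ℝ, 0 < t → InDom T t →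
    pdt (fun x τ => Real.log (ρ x τ)) ξ t
      = Ds ρ (Ds ρ f) ξ t / f ξ t + 2 * (Ds ρ (Ds ρ g) ξ t / g ξ t)

/-! ### Auxiliary lemmas -/

/-- Second derivative test: at a local max of a smooth function, `(φ'')(x) ≤ 0`. -/
lemma deriv2_nonpos_of_isLocalMax {φ : ℝ → ℝ} {x : ℝ} (hφ : ContDiff ℝ (⊤:ℕ∞) φ)
    (h : IsLocalMax φ x) : deriv (deriv φ) x ≤ 0 := by
  by_contra hpos
  push_neg at hpos
  have hφ' : ContDiff ℝ (⊤:ℕ∞) (deriv φ) := (contDiff_infty_iff_deriv.mp hφ).2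
  have hc : Continuous (deriv (deriv φ)) := (contDiff_infty_iff_deriv.mp hφ').2.continuous
  obtain ⟨η, hη, hball⟩ := Metric.isOpen_iff.mp (isOpen_lt continuous_const hc)
      x (by simpa using hpos)
  have hmono : StrictMonoOn (deriv φ) (Metric.ball x η) := by
    apply strictMonoOn_of_deriv_pos (convex_ball x η) (hφ'.continuous.continuousOn)
    intro y hy
    exact hball (by simpa [Metric.isOpen_ball.interior_eq] using hy)
  have hd0 : deriv φ x = 0 := h.deriv_eq_zero
  have hsub : Icc x (x + η/2) ⊆ Metric.ball x η := by
    intro y hy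
    simp only [Metric.mem_ball, Real.dist_eq, abs_lt]
    constructor <;> [linarith [hy.1]; linarith [hy.2]]
  have hmono2 : StrictMonoOn φ (Icc x (x + η/2)) := by
    apply strictMonoOn_of_deriv_pos (convex_Icc _ _) (hφ.continuous.continuousOn)
    intro y hy
    rw [interior_Icc] at hy
    have : deriv φ x < deriv φ y :=
      hmono (Metric.mem_ball_self hη) (hsub ⟨hy.1.le, hy.2.le⟩) hy.1
    linarith [hd0 ▸ this]
  have hIoc : Ioc x (x + η/2) ∈ 𝓝[>] x := Ioc_mem_nhdsGT_of_mem ⟨le_refl _, by linarith⟩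
  have h' : ∀ᶠ y in 𝓝[>] x, φ y ≤ φ x := h.filter_mono nhdsWithin_le_nhds
  obtain ⟨y, hy1, hy2⟩ := (h'.and (eventually_of_mem hIoc (fun y hy => hy))).exists
  exact absurd hy1 (not_le.mpr (hmono2 ⟨le_refl _, by linarith [hy2.2]⟩ ⟨hy2.1.le, hy2.2⟩ hy2.1))

/-- If `φ` has a max over `[a,t]` at the right endpoint `t` and is differentiable there,
then the derivative is nonnegative. -/
lemma deriv_nonneg_of_max_right {φ : ℝ → ℝ} {a t L : ℝ} (hat : a < t)
    (hd : HasDerivAt φ L t) (hmax : ∀ s ∈ Icc a t, φ s ≤ φ t) : 0 ≤ L := by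
  have h1 : HasDerivWithinAt φ L (Iio t) t := hd.hasDerivWithinAt
  rw [hasDerivWithinAt_iff_tendsto_slope] at h1
  have hset : Iio t \ {t} = Iio t := Set.diff_singleton_eq_self (by simp)
  rw [hset] at h1
  have h2 : Ioo a t ∈ 𝓝[Iio t] t := Ioo_mem_nhdsLT_of_mem ⟨hat, le_refl _⟩
  refine ge_of_tendsto h1 (eventually_of_mem h2 fun s hs => ?_)
  rw [slope_def_field]
  have h3 : φ s ≤ φ t := hmax s ⟨hs.1.le, hs.2.le⟩
  have := hs.2
  rw [div_nonneg_iff]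
  right
  constructor <;> [linarith; linarith]

/-- Scalar parabolic maximum principle on the periodic strip. -/
lemma maxPrinciple (w : ℝ → ℝ → ℝ) (τ : ℝ) (hτ : 0 < τ) (B : ℝ) (hB : 1 ≤ B)
    (hcont : ContinuousOn (fun p : ℝ × ℝ => w p.1 p.2) (univ ×ˢ Icc 0 τ))
    (hslice : ∀ t ∈ Icc (0:ℝ) τ, ContDiff ℝ (⊤:ℕ∞) (fun x => w x t))
    (htime : ∀ ξ t, 0 < t → t ≤ τ → HasDerivAt (fun τ' => w ξ τ') (pdt w ξ t) t)
    (hper : ∀ ξ t, w (ξ + 2*π) t = w ξ t)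
    (hkey : ∀ ξ t, 0 < t → t ≤ τ → pd1 w ξ t = 0 → pd1 (pd1 w) ξ t ≤ 0 →
      1 < w ξ t → pdt w ξ t ≤ 0)
    (h0 : ∀ ξ, w ξ 0 ≤ B) :
    ∀ ξ, w ξ τ ≤ B := by
  by_contra hcon
  push_neg at hcon
  obtain ⟨ξ₁, hξ₁⟩ := hcon
  set ε := w ξ₁ τ - B with hε
  have hεpos : 0 < ε := by simp [hε]; linarith
  set δ := ε / (2 * τ) with hδ
  have hδpos : 0 < δ := div_pos hεpos (by linarith)
  set W : ℝ × ℝ → ℝ := fun p => w p.1 p.2 - δ * p.2 with hW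
  set K : Set (ℝ × ℝ) := Icc 0 (2*π) ×ˢ Icc 0 τ with hK
  have hKc : IsCompact K := (isCompact_Icc).prod (isCompact_Icc)
  have hKne : K.Nonempty := ⟨(0, 0), by
    constructor <;> constructor <;> first | rfl | positivity | exact hτ.le⟩
  have hWc : ContinuousOn W K := by
    apply ContinuousOn.sub
    · exact hcont.mono (by intro p hp; exact ⟨trivial, hp.2⟩)
    · exact (continuous_const.mul continuous_snd).continuousOn
  obtain ⟨p₀, hp₀K, hmax⟩ := hKc.exists_isMaxOn hKne hWc
  have hmax' : ∀ p ∈ K, W p ≤ W p₀ := hmax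
  clear_value W δ ε
  have hext : ∀ x, ∀ t ∈ Icc (0:ℝ) τ, W (x, t) ≤ W p₀ := by
    intro x t ht
    have hper' : Function.Periodic (fun y => w y t) (2*π) := fun y => hper y t
    obtain ⟨y, hy, hxy⟩ := hper'.exists_mem_Ico₀ (by positivity) x
    have : W (x, t) = W (y, t) := by simp only [hW]; rw [hxy]
    rw [this]
    exact hmax' (y, t) ⟨⟨hy.1, hy.2.le⟩, ht⟩
  obtain ⟨ξ₀, t₀⟩ := p₀
  have hξ₀ : ξ₀ ∈ Icc 0 (2*π) := hp₀K.1
  have ht₀ : t₀ ∈ Icc 0 τ := hp₀K.2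
  have hlow : B + ε / 2 ≤ W (ξ₀, t₀) := by
    have := hext ξ₁ τ ⟨hτ.le, le_refl _⟩
    have hWξ₁ : W (ξ₁, τ) = B + ε / 2 := by
      simp only [hW]
      have : δ * τ = ε / 2 := by rw [hδ, div_mul_eq_mul_div, div_eq_div_iff (by positivity) (by norm_num)]; ring
      rw [this]; simp [hε]; ring
    linarith [hWξ₁ ▸ this]
  have ht₀pos : 0 < t₀ := by
    rcases eq_or_lt_of_le ht₀.1 with h | h
    · exfalso
      have h1 : W (ξ₀, t₀) = w ξ₀ 0 := by simp [hW, ← h]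
      have h2 := h0 ξ₀
      linarith
    · exact h
  have hw₀ : 1 < w ξ₀ t₀ := by
    have : W (ξ₀, t₀) = w ξ₀ t₀ - δ * t₀ := by rw [hW]
    nlinarith [hlow, hδpos, ht₀pos]
  have hglobal : ∀ x, w x t₀ ≤ w ξ₀ t₀ := by
    intro x
    have := hext x t₀ ht₀
    simp only [hW] at this
    linarith
  have hsmax : IsLocalMax (fun x => w x t₀) ξ₀ :=
    Filter.Eventually.of_forall hglobal
  have hcd : ContDiff ℝ (⊤:ℕ∞) (fun x => w x t₀) := hslice t₀ ht₀
  have hd1 : pd1 w ξ₀ t₀ = 0 := hsmax.deriv_eq_zero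
  have hd2 : pd1 (pd1 w) ξ₀ t₀ ≤ 0 := by
    have : (fun x => pd1 w x t₀) = deriv (fun x => w x t₀) := rfl
    show deriv (fun x => pd1 w x t₀) ξ₀ ≤ 0
    rw [this]
    exact deriv2_nonpos_of_isLocalMax hcd hsmax
  have hdt : HasDerivAt (fun s => w ξ₀ s - δ * s) (pdt w ξ₀ t₀ - δ) t₀ :=
    (htime ξ₀ t₀ ht₀pos ht₀.2).sub ((hasDerivAt_id t₀).const_mul δ |>.congr_deriv (by ring))
  have htmax : ∀ s ∈ Icc (0:ℝ) t₀, w ξ₀ s - δ * s ≤ w ξ₀ t₀ - δ * t₀ := by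
    intro s hs
    have := hext ξ₀ s ⟨hs.1, hs.2.trans ht₀.2⟩
    simp only [hW] at this
    linarith
  have hge : 0 ≤ pdt w ξ₀ t₀ - δ := deriv_nonneg_of_max_right ht₀pos hdt htmax
  have hle : pdt w ξ₀ t₀ ≤ 0 := hkey ξ₀ t₀ ht₀pos ht₀.2 hd1 hd2 hw₀
  linarith

/-- Second derivative of a quotient of smooth functions, at a point. -/
lemma deriv2_quot {p q : ℝ → ℝ} (hp : ContDiff ℝ (⊤:ℕ∞) p) (hq : ContDiff ℝ (⊤:ℕ∞) q)
    (hqpos : ∀ x, 0 < q x) (ξ : ℝ) :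
    deriv (fun x => deriv (fun y => p y / q y) x) ξ =
      ((deriv (deriv p) ξ * q ξ + deriv p ξ * deriv q ξ
          - (deriv p ξ * deriv q ξ + p ξ * deriv (deriv q) ξ)) * q ξ ^ 2
        - (deriv p ξ * q ξ - p ξ * deriv q ξ) * (2 * q ξ ^ 1 * deriv q ξ)) / (q ξ ^ 2) ^ 2 := by
  have h1 : ((⊤:ℕ∞):WithTop ℕ∞) ≠ 0 := by simp
  have hDu : (fun x => deriv (fun y => p y / q y) x)
      = fun x => (deriv p x * q x - p x * deriv q x) / q x ^ 2 :=
    funext fun x => ((hp.differentiable h1 x).hasDerivAt.div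
      (hq.differentiable h1 x).hasDerivAt (hqpos x).ne').deriv
  rw [hDu]
  have hp' := (contDiff_infty_iff_deriv.mp hp).2
  have hq' := (contDiff_infty_iff_deriv.mp hq).2
  exact ((((hp'.differentiable h1 ξ).hasDerivAt.mul (hq.differentiable h1 ξ).hasDerivAt).sub
    ((hp.differentiable h1 ξ).hasDerivAt.mul (hq'.differentiable h1 ξ).hasDerivAt)).div
    ((hq.differentiable h1 ξ).hasDerivAt.pow 2) (pow_ne_zero 2 (hqpos ξ).ne')).deriv

/-- First derivative of a quotient, pointwise. -/
lemma deriv1_quot {p q : ℝ → ℝ} (hp : ContDiff ℝ (⊤:ℕ∞) p) (hq : ContDiff ℝ (⊤:ℕ∞) q)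
    (hqpos : ∀ x, 0 < q x) (x : ℝ) :
    deriv (fun y => p y / q y) x = (deriv p x * q x - p x * deriv q x) / q x ^ 2 := by
  have h1 : ((⊤:ℕ∞):WithTop ℕ∞) ≠ 0 := by simp
  exact ((hp.differentiable h1 x).hasDerivAt.div
      (hq.differentiable h1 x).hasDerivAt (hqpos x).ne').deriv

/-- Derivative of `(deriv p)/q`. -/
lemma deriv_dquot {p q : ℝ → ℝ} (hp : ContDiff ℝ (⊤:ℕ∞) p) (hq : ContDiff ℝ (⊤:ℕ∞) q)
    (hqpos : ∀ x, 0 < q x) (ξ : ℝ) :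
    deriv (fun x => deriv p x / q x) ξ =
      (deriv (deriv p) ξ * q ξ - deriv p ξ * deriv q ξ) / q ξ ^ 2 := by
  have h1 : ((⊤:ℕ∞):WithTop ℕ∞) ≠ 0 := by simp
  have hp' := (contDiff_infty_iff_deriv.mp hp).2
  exact ((hp'.differentiable h1 ξ).hasDerivAt.div
      (hq.differentiable h1 ξ).hasDerivAt (hqpos ξ).ne').deriv

/-- A continuous `2π`-periodic function is bounded above. -/
lemma bddAbove_range_of_periodic {φ : ℝ → ℝ} (hc : Continuous φ)
    (hp : Function.Periodic φ (2*π)) : BddAbove (range φ) := by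
  rw [← hp.image_Icc (by positivity) 0]
  exact (isCompact_Icc.image hc).bddAbove

section WBhelpers

variable {T : ℝ≥0∞} {f g ρ : ℝ → ℝ → ℝ}

lemma WB.cd_f (sol : WarpedBerger T f g ρ) :
    ContDiffOn ℝ (⊤:ℕ∞) (fun p : ℝ × ℝ => f p.1 p.2) (univ ×ˢ {t : ℝ | InDom T t}) :=
  contDiff_fst.comp_contDiffOn sol.smooth

lemma WB.cd_g (sol : WarpedBerger T f g ρ) :
    ContDiffOn ℝ (⊤:ℕ∞) (fun p : ℝ × ℝ => g p.1 p.2) (univ ×ˢ {t : ℝ | InDom T t}) :=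
  (contDiff_fst.comp contDiff_snd).comp_contDiffOn sol.smooth

lemma WB.cd_ρ (sol : WarpedBerger T f g ρ) :
    ContDiffOn ℝ (⊤:ℕ∞) (fun p : ℝ × ℝ => ρ p.1 p.2) (univ ×ˢ {t : ℝ | InDom T t}) :=
  (contDiff_snd.comp contDiff_snd).comp_contDiffOn sol.smooth

lemma WB.slice_cd {φ : ℝ → ℝ → ℝ}
    (hφ : ContDiffOn ℝ (⊤:ℕ∞) (fun p : ℝ × ℝ => φ p.1 p.2) (univ ×ˢ {t : ℝ | InDom T t}))
    {t : ℝ} (ht : InDom T t) : ContDiff ℝ (⊤:ℕ∞) (fun x => φ x t) := by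
  rw [← contDiffOn_univ]
  exact ContDiffOn.comp hφ ((contDiff_id.prodMk contDiff_const).contDiffOn)
    (fun x _ => ⟨trivial, ht⟩)

lemma WB.indom_nhds {t : ℝ} (ht0 : 0 < t) (ht : InDom T t) : {s : ℝ | InDom T s} ∈ 𝓝 t := by
  have hopen : IsOpen ((Ioi (0:ℝ)) ∩ (ENNReal.ofReal ⁻¹' Iio T)) :=
    isOpen_Ioi.inter (ENNReal.continuous_ofReal.isOpen_preimage _ isOpen_Iio)
  exact mem_of_superset (hopen.mem_nhds ⟨ht0, ht.2⟩) (fun s hs => ⟨le_of_lt hs.1, hs.2⟩)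

lemma WB.time_hasDeriv {φ : ℝ → ℝ → ℝ}
    (hφ : ContDiffOn ℝ (⊤:ℕ∞) (fun p : ℝ × ℝ => φ p.1 p.2) (univ ×ˢ {t : ℝ | InDom T t}))
    {ξ t : ℝ} (ht0 : 0 < t) (ht : InDom T t) :
    HasDerivAt (fun τ => φ ξ τ) (pdt φ ξ t) t := by
  have h1 : ContDiffAt ℝ (⊤:ℕ∞) (fun p : ℝ × ℝ => φ p.1 p.2) (ξ, t) :=
    hφ.contDiffAt (prod_mem_nhds univ_mem (WB.indom_nhds ht0 ht))
  have h2 : ContDiffAt ℝ (⊤:ℕ∞) (fun τ => φ ξ τ) t :=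
    h1.comp t (contDiffAt_const.prodMk contDiffAt_id)
  exact (h2.differentiableAt (by simp)).hasDerivAt

/-- The key identity for `u = f/g` at a spatial critical point. -/
lemma WB.key_u (sol : WarpedBerger T f g ρ) {ξ t : ℝ} (ht0 : 0 < t) (ht : InDom T t)
    (hcrit : pd1 (fun x s => f x s / g x s) ξ t = 0) :
    pdt (fun x s => f x s / g x s) ξ t
      = pd1 (pd1 (fun x s => f x s / g x s)) ξ t / (ρ ξ t) ^ 2
        + 4 * (f ξ t / g ξ t) * (1 - (f ξ t / g ξ t) ^ 2) / (g ξ t) ^ 2 := by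
  have cf : ContDiff ℝ (⊤:ℕ∞) (fun x => f x t) := WB.slice_cd (WB.cd_f sol) ht
  have cg : ContDiff ℝ (⊤:ℕ∞) (fun x => g x t) := WB.slice_cd (WB.cd_g sol) ht
  have cρ : ContDiff ℝ (⊤:ℕ∞) (fun x => ρ x t) := WB.slice_cd (WB.cd_ρ sol) ht
  have hgpos : ∀ x, 0 < g x t := fun x => sol.g_pos x t ht
  have hρpos : ∀ x, 0 < ρ x t := fun x => sol.ρ_pos x t ht
  have ha : 0 < f ξ t := sol.f_pos ξ t ht
  have hb : 0 < g ξ t := hgpos ξ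
  have hr : 0 < ρ ξ t := hρpos ξ
  have htf : HasDerivAt (fun τ => f ξ τ) (pdt f ξ t) t := WB.time_hasDeriv (WB.cd_f sol) ht0 ht
  have htg : HasDerivAt (fun τ => g ξ τ) (pdt g ξ t) t := WB.time_hasDeriv (WB.cd_g sol) ht0 ht
  simp only [pd1] at hcrit
  rw [deriv1_quot cf cg hgpos ξ] at hcrit
  have hrel : deriv (fun y => f y t) ξ * g ξ t - f ξ t * deriv (fun y => g y t) ξ = 0 := by
    field_simp at hcrit
    linarith
  have ha1 : deriv (fun y => f y t) ξ = f ξ t * deriv (fun y => g y t) ξ / g ξ t := by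
    field_simp
    linarith
  simp only [pdt, pd1]
  rw [show deriv (fun τ => f ξ τ / g ξ τ) t = _ from (htf.div htg hb.ne').deriv]
  rw [sol.eq_f ξ t ht0 ht, sol.eq_g ξ t ht0 ht]
  simp only [Ds, pd1]
  rw [deriv_dquot cf cρ hρpos ξ, deriv_dquot cg cρ hρpos ξ, deriv2_quot cf cg hgpos ξ]
  rw [ha1]
  field_simp
  ring

/-- The key identity for `v = g/f` at a spatial critical point. -/
lemma WB.key_v (sol : WarpedBerger T f g ρ) {ξ t : ℝ} (ht0 : 0 < t) (ht : InDom T t)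
    (hcrit : pd1 (fun x s => g x s / f x s) ξ t = 0) :
    pdt (fun x s => g x s / f x s) ξ t
      = pd1 (pd1 (fun x s => g x s / f x s)) ξ t / (ρ ξ t) ^ 2
        + 4 * (f ξ t / g ξ t) * (1 - (g ξ t / f ξ t) ^ 2) / (g ξ t) ^ 2 := by
  have cf : ContDiff ℝ (⊤:ℕ∞) (fun x => f x t) := WB.slice_cd (WB.cd_f sol) ht
  have cg : ContDiff ℝ (⊤:ℕ∞) (fun x => g x t) := WB.slice_cd (WB.cd_g sol) ht
  have cρ : ContDiff ℝ (⊤:ℕ∞) (fun x => ρ x t) := WB.slice_cd (WB.cd_ρ sol) ht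
  have hgpos : ∀ x, 0 < g x t := fun x => sol.g_pos x t ht
  have hfpos : ∀ x, 0 < f x t := fun x => sol.f_pos x t ht
  have hρpos : ∀ x, 0 < ρ x t := fun x => sol.ρ_pos x t ht
  have ha : 0 < f ξ t := hfpos ξ
  have hb : 0 < g ξ t := hgpos ξ
  have hr : 0 < ρ ξ t := hρpos ξ
  have htf : HasDerivAt (fun τ => f ξ τ) (pdt f ξ t) t := WB.time_hasDeriv (WB.cd_f sol) ht0 ht
  have htg : HasDerivAt (fun τ => g ξ τ) (pdt g ξ t) t := WB.time_hasDeriv (WB.cd_g sol) ht0 ht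
  simp only [pd1] at hcrit
  rw [deriv1_quot cg cf hfpos ξ] at hcrit
  have hrel : deriv (fun y => g y t) ξ * f ξ t - g ξ t * deriv (fun y => f y t) ξ = 0 := by
    field_simp at hcrit
    linarith
  have hb1 : deriv (fun y => g y t) ξ = g ξ t * deriv (fun y => f y t) ξ / f ξ t := by
    field_simp
    linarith
  simp only [pdt, pd1]
  rw [show deriv (fun τ => g ξ τ / f ξ τ) t = _ from (htg.div htf ha.ne').deriv]
  rw [sol.eq_f ξ t ht0 ht, sol.eq_g ξ t ht0 ht]
  simp only [Ds, pd1]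
  rw [deriv_dquot cf cρ hρpos ξ, deriv_dquot cg cρ hρpos ξ, deriv2_quot cg cf hfpos ξ]
  rw [hb1]
  field_simp
  ring

end WBhelpers

/-- The eccentricity of every warped Berger solution of Ricci flow is
uniformly bounded:  with `C₀` defined from the initial data as
`max { max_ξ |f−g|/g , max_ξ |g−f|/f }` at `t = 0`, one has
`|f − g| ≤ C₀ · min{f,g}` pointwise for as long as the solution exists. -/
theorem eccentricity_bound (T : ℝ≥0∞) (f g ρ : ℝ → ℝ → ℝ)
    (sol : WarpedBerger T f g ρ) :
    ∀ ξ t : ℝ, InDom T t →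
      |f ξ t - g ξ t| ≤
        max (⨆ ξ' : ℝ, |f ξ' 0 - g ξ' 0| / g ξ' 0)
            (⨆ ξ' : ℝ, |g ξ' 0 - f ξ' 0| / f ξ' 0) * min (f ξ t) (g ξ t) := by
  intro ξ t hdom
  set C₁ := ⨆ ξ' : ℝ, |f ξ' 0 - g ξ' 0| / g ξ' 0 with hC₁
  set C₂ := ⨆ ξ' : ℝ, |g ξ' 0 - f ξ' 0| / f ξ' 0 with hC₂
  have hdom0 : InDom T 0 := ⟨le_refl 0, by simpa using sol.T_pos⟩
  have cf0 : ContDiff ℝ (⊤:ℕ∞) (fun x => f x 0) := WB.slice_cd (WB.cd_f sol) hdom0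
  have cg0 : ContDiff ℝ (⊤:ℕ∞) (fun x => g x 0) := WB.slice_cd (WB.cd_g sol) hdom0
  have hgpos0 : ∀ x, 0 < g x 0 := fun x => sol.g_pos x 0 hdom0
  have hfpos0 : ∀ x, 0 < f x 0 := fun x => sol.f_pos x 0 hdom0
  have hbdd1 : BddAbove (range (fun ξ' => |f ξ' 0 - g ξ' 0| / g ξ' 0)) :=
    bddAbove_range_of_periodic
      (((cf0.continuous.sub cg0.continuous).abs).div cg0.continuous (fun x => (hgpos0 x).ne'))
      (fun x => by simp [sol.f_per, sol.g_per])
  have hbdd2 : BddAbove (range (fun ξ' => |g ξ' 0 - f ξ' 0| / f ξ' 0)) :=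
    bddAbove_range_of_periodic
      (((cg0.continuous.sub cf0.continuous).abs).div cf0.continuous (fun x => (hfpos0 x).ne'))
      (fun x => by simp [sol.f_per, sol.g_per])
  have hC₁0 : 0 ≤ C₁ :=
    le_trans (div_nonneg (abs_nonneg _) (hgpos0 0).le) (le_ciSup hbdd1 0)
  set C₀ := max C₁ C₂ with hC₀
  have hC₀0 : 0 ≤ C₀ := le_trans hC₁0 (le_max_left _ _)
  have h0u : ∀ ξ', f ξ' 0 / g ξ' 0 ≤ C₀ + 1 := by
    intro ξ'
    have h1 : f ξ' 0 / g ξ' 0 = 1 + (f ξ' 0 - g ξ' 0) / g ξ' 0 := by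
      field_simp [(hgpos0 ξ').ne']
      ring
    have h2 : (f ξ' 0 - g ξ' 0) / g ξ' 0 ≤ |f ξ' 0 - g ξ' 0| / g ξ' 0 := by
      gcongr
      · exact (hgpos0 ξ').le
      · exact le_abs_self _
    have h3 : |f ξ' 0 - g ξ' 0| / g ξ' 0 ≤ C₁ := le_ciSup hbdd1 ξ'
    have h4 : C₁ ≤ C₀ := le_max_left _ _
    linarith
  have h0v : ∀ ξ', g ξ' 0 / f ξ' 0 ≤ C₀ + 1 := by
    intro ξ'
    have h1 : g ξ' 0 / f ξ' 0 = 1 + (g ξ' 0 - f ξ' 0) / f ξ' 0 := by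
      field_simp [(hfpos0 ξ').ne']
      ring
    have h2 : (g ξ' 0 - f ξ' 0) / f ξ' 0 ≤ |g ξ' 0 - f ξ' 0| / f ξ' 0 := by
      gcongr
      · exact (hfpos0 ξ').le
      · exact le_abs_self _
    have h3 : |g ξ' 0 - f ξ' 0| / f ξ' 0 ≤ C₂ := le_ciSup hbdd2 ξ'
    have h4 : C₂ ≤ C₀ := le_max_right _ _
    linarith
  have hu : f ξ t / g ξ t ≤ C₀ + 1 ∧ g ξ t / f ξ t ≤ C₀ + 1 := by
    rcases eq_or_lt_of_le hdom.1 with h0 | htpos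
    · rw [← h0]
      exact ⟨h0u ξ, h0v ξ⟩
    · have hindom : ∀ s ∈ Icc (0:ℝ) t, InDom T s := fun s hs =>
        ⟨hs.1, lt_of_le_of_lt (ENNReal.ofReal_le_ofReal hs.2) hdom.2⟩
      have hindom' : ∀ s, 0 < s → s ≤ t → InDom T s := fun s h1 h2 => hindom s ⟨h1.le, h2⟩
      have hsub : (univ ×ˢ Icc 0 t : Set (ℝ × ℝ)) ⊆ univ ×ˢ {s : ℝ | InDom T s} := by
        intro p hp
        exact ⟨trivial, hindom p.2 hp.2⟩
      constructor
      · refine maxPrinciple (fun x s => f x s / g x s) t htpos (C₀+1) (by linarith)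
          ?_ ?_ ?_ ?_ ?_ h0u ξ
        · exact ((WB.cd_f sol).continuousOn.mono hsub).div
            ((WB.cd_g sol).continuousOn.mono hsub)
            (fun p hp => (sol.g_pos p.1 p.2 (hindom p.2 hp.2)).ne')
        · intro s hs
          exact (WB.slice_cd (WB.cd_f sol) (hindom s hs)).div
            (WB.slice_cd (WB.cd_g sol) (hindom s hs))
            (fun x => (sol.g_pos x s (hindom s hs)).ne')
        · intro ξ' s h1 h2
          have hd := hindom' s h1 h2
          exact (((WB.time_hasDeriv (WB.cd_f sol) h1 hd).differentiableAt).div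
            ((WB.time_hasDeriv (WB.cd_g sol) h1 hd).differentiableAt)
            (sol.g_pos ξ' s hd).ne').hasDerivAt
        · intro ξ' s
          show f (ξ' + 2*π) s / g (ξ' + 2*π) s = f ξ' s / g ξ' s
          rw [sol.f_per, sol.g_per]
        · intro ξ' s h1 h2 hc1 hc2 hw
          have hd := hindom' s h1 h2
          rw [WB.key_u sol h1 hd hc1]
          have hbp := sol.g_pos ξ' s hd
          have hap := sol.f_pos ξ' s hd
          have hrp := sol.ρ_pos ξ' s hd
          have hq : 1 < f ξ' s / g ξ' s := by simpa using hw
          have h5 : pd1 (pd1 (fun x s => f x s / g x s)) ξ' s / (ρ ξ' s) ^ 2 ≤ 0 :=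
            div_nonpos_of_nonpos_of_nonneg hc2 (sq_nonneg _)
          have h6 : 4 * (f ξ' s / g ξ' s) * (1 - (f ξ' s / g ξ' s) ^ 2) / (g ξ' s) ^ 2 ≤ 0 :=
            div_nonpos_of_nonpos_of_nonneg (by nlinarith) (sq_nonneg _)
          linarith
      · refine maxPrinciple (fun x s => g x s / f x s) t htpos (C₀+1) (by linarith)
          ?_ ?_ ?_ ?_ ?_ h0v ξ
        · exact ((WB.cd_g sol).continuousOn.mono hsub).div
            ((WB.cd_f sol).continuousOn.mono hsub)
            (fun p hp => (sol.f_pos p.1 p.2 (hindom p.2 hp.2)).ne')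
        · intro s hs
          exact (WB.slice_cd (WB.cd_g sol) (hindom s hs)).div
            (WB.slice_cd (WB.cd_f sol) (hindom s hs))
            (fun x => (sol.f_pos x s (hindom s hs)).ne')
        · intro ξ' s h1 h2
          have hd := hindom' s h1 h2
          exact (((WB.time_hasDeriv (WB.cd_g sol) h1 hd).differentiableAt).div
            ((WB.time_hasDeriv (WB.cd_f sol) h1 hd).differentiableAt)
            (sol.f_pos ξ' s hd).ne').hasDerivAt
        · intro ξ' s
          show g (ξ' + 2*π) s / f (ξ' + 2*π) s = g ξ' s / f ξ' s
          rw [sol.f_per, sol.g_per]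
        · intro ξ' s h1 h2 hc1 hc2 hw
          have hd := hindom' s h1 h2
          rw [WB.key_v sol h1 hd hc1]
          have hbp := sol.g_pos ξ' s hd
          have hap := sol.f_pos ξ' s hd
          have hrp := sol.ρ_pos ξ' s hd
          have hq : 1 < g ξ' s / f ξ' s := by simpa using hw
          have h5 : pd1 (pd1 (fun x s => g x s / f x s)) ξ' s / (ρ ξ' s) ^ 2 ≤ 0 :=
            div_nonpos_of_nonpos_of_nonneg hc2 (sq_nonneg _)
          have h6 : 4 * (f ξ' s / g ξ' s) * (1 - (g ξ' s / f ξ' s) ^ 2) / (g ξ' s) ^ 2 ≤ 0 := by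
            apply div_nonpos_of_nonpos_of_nonneg ?_ (sq_nonneg _)
            have hpos : 0 < f ξ' s / g ξ' s := div_pos hap hbp
            have h1q : 1 - (g ξ' s / f ξ' s) ^ 2 ≤ 0 := by nlinarith
            exact mul_nonpos_of_nonneg_of_nonpos (by positivity) h1q
          linarith
  obtain ⟨hu1, hu2⟩ := hu
  have hap : 0 < f ξ t := sol.f_pos ξ t hdom
  have hbp : 0 < g ξ t := sol.g_pos ξ t hdom
  rcases le_total (g ξ t) (f ξ t) with hle | hle
  · rw [min_eq_right hle, abs_of_nonneg (by linarith)]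
    have h7 := (div_le_iff₀ hbp).mp hu1
    nlinarith
  · rw [min_eq_left hle, abs_of_nonpos (by linarith)]
    have h7 := (div_le_iff₀ hap).mp hu2
    nlinarith
end
end
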